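/- Let (X, ε : X₀ → G) be an augmented simplicial group, n ≥ 1 and k ≥ 2. Suppose the exactness condition d^n_n(⋂_{i=0}^{n-1} Ker d^n_i) = ⋂_{i=0}^{n-1} Ker d^{n-1}_i holds at level n (with the convention that for n = 1 the right-hand side is Ker ε); this holds in particular when (X, ε, G) is aspherical. Then d^n_n(D_k(X_n; Ker d^n_0, …, Ker d^n_{n-1})) = D_k(X_{n-1}; Ker d^{n-1}_0, …, Ker d^{n-1}_{n-1}), where for n = 1 the right-hand side is D_k(X₀; Ker ε). -/

import Mathlib

open CategoryTheory Simplicial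

/-- Iterated commutator `⁅H₁, ⁅H₂, …, ⁅H_{k-1}, H_k⁆…⁆⁆` of a list of subgroups. -/
def iterCommutator {F : Type*} [Group F] : List (Subgroup F) → Subgroup F := fun l =>
  match l with
  | [] => ⊥
  | H :: [] => H
  | H :: t => ⁅H, iterCommutator t⁆

/-- `K_B = ⋂_{i∈B} R_i`, with the convention `K_∅ = F`. -/
def adInf {F : Type*} [Group F] {n : ℕ} (R : Fin n → Subgroup F) (B : Finset (Fin n)) :
    Subgroup F :=
  ⨅ i ∈ B, R i

/-- `D_k(F;A)`: the product (join) of the iterated commutator subgroups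
`⁅K_{A₁},⁅K_{A₂},…,⁅K_{A_{k-1}},K_{A_k}⁆…⁆⁆` over all `k`-tuples `(A₁,…,A_k)` of
(possibly empty) subsets with `A₁ ∪ ⋯ ∪ A_k = A`. -/
def adD {F : Type*} [Group F] {n : ℕ} (R : Fin n → Subgroup F) (k : ℕ) (A : Finset (Fin n)) :
    Subgroup F :=
  ⨆ (c : Fin k → Finset (Fin n)) (_ : Finset.univ.sup c = A),
    iterCommutator (List.ofFn fun i => adInf R (c i))

lemma iterCommutator_map {F F' : Type*} [Group F] [Group F'] (f : F →* F')
    (L : List (Subgroup F)) :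
    Subgroup.map f (iterCommutator L) = iterCommutator (L.map (Subgroup.map f)) := by
  induction L with
  | nil => simp [iterCommutator]
  | cons H t ih =>
    cases t with
    | nil => simp [iterCommutator]
    | cons a t' =>
      rw [show iterCommutator (H :: a :: t') = ⁅H, iterCommutator (a :: t')⁆ from rfl,
        Subgroup.map_commutator, ih]
      rfl

lemma adD_map {F F' : Type*} [Group F] [Group F'] (f : F →* F') {n k : ℕ}
    (R : Fin n → Subgroup F) (S : Fin n → Subgroup F')
    (h : ∀ B, Subgroup.map f (adInf R B) = adInf S B) (A : Finset (Fin n)) :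
    Subgroup.map f (adD R k A) = adD S k A := by
  unfold adD
  rw [Subgroup.map_iSup]
  refine iSup_congr fun c => ?_
  rw [Subgroup.map_iSup]
  refine iSup_congr fun hc => ?_
  rw [iterCommutator_map, List.map_ofFn]
  exact congrArg (fun g => iterCommutator (List.ofFn g)) (funext fun i => h (c i))

namespace SG
variable (X : SimplicialObject GrpCat)

lemma pdd {q : ℕ} {i j : Fin (q + 2)} (h : i ≤ j) (x : (X _⦋q + 2⦌ : Type _)) :
    (X.δ i).hom ((X.δ j.succ).hom x) = (X.δ j).hom ((X.δ i.castSucc).hom x) := by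
  simpa using congrArg (fun f => f.hom x) (X.δ_comp_δ h)

lemma pds_succ {q : ℕ} {j : Fin (q + 2)} {i : Fin (q + 1)} (h : j = i.succ)
    (w : (X _⦋q⦌ : Type _)) : (X.δ j).hom ((X.σ i).hom w) = w := by
  simpa using congrArg (fun f => f.hom w) (SimplicialObject.δ_comp_σ_succ' X h)

lemma pds_self {q : ℕ} {j : Fin (q + 3)} {i : Fin (q + 2)} (h : j = i.castSucc)
    (w : (X _⦋q + 1⦌ : Type _)) : (X.δ j).hom ((X.σ i).hom w) = w := by
  simpa using congrArg (fun f => f.hom w) (SimplicialObject.δ_comp_σ_self' X h)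

lemma pds_le {q : ℕ} {i : Fin (q + 2)} {j : Fin (q + 1)} (h : i ≤ j.castSucc)
    (w : (X _⦋q + 1⦌ : Type _)) : (X.δ i.castSucc).hom ((X.σ j.succ).hom w) = (X.σ j).hom ((X.δ i).hom w) := by
  simpa using congrArg (fun f => f.hom w) (SimplicialObject.δ_comp_σ_of_le X h)

lemma pds_gt {q : ℕ} {i : Fin (q + 2)} {j : Fin (q + 1)} (h : j.castSucc < i)
    (w : (X _⦋q + 1⦌ : Type _)) : (X.δ i.succ).hom ((X.σ j.castSucc).hom w) = (X.σ j).hom ((X.δ i).hom w) := by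
  simpa using congrArg (fun f => f.hom w) (SimplicialObject.δ_comp_σ_of_gt X h)

end SG

namespace SG

set_option maxHeartbeats 2000000 in
theorem moore (X : SimplicialObject GrpCat) (q : ℕ) :
    ∀ (A : Finset (Fin (q + 2))) (j : Fin (q + 2)), j ∉ A →
      ∀ y : (X _⦋q + 1⦌ : Type _), (∀ i ∈ A, (X.δ i).hom y = 1) →
        ∃ x : (X _⦋q + 2⦌ : Type _),
          (X.δ (Fin.last (q + 2))).hom x = y ∧ ∀ i ∈ A, (X.δ i.castSucc).hom x = 1 := by
  intro A
  induction A using Finset.strongInduction with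
  | _ A ih =>
  intro j hj y hy
  rcases A.eq_empty_or_nonempty with rfl | hne
  · refine ⟨(X.σ (Fin.last (q + 1))).hom y, pds_succ X (Fin.ext (by simp)) y, by simp⟩
  by_cases hcase : ∃ a ∈ A, j < a
  · -- case (a): some element of A above the hole; take the least one, t
    classical
    set T := A.filter (fun a => j < a) with hT
    have hTne : T.Nonempty := by
      obtain ⟨a, ha, hja⟩ := hcase
      exact ⟨a, by simp [hT, ha, hja]⟩
    set t := T.min' hTne with htdef
    have htT : t ∈ T := T.min'_mem hTne
    have htA : t ∈ A := (Finset.mem_filter.1 htT).1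
    have hjt : j < t := (Finset.mem_filter.1 htT).2
    have ht1 : 1 ≤ t.val := by
      have := Fin.lt_def.1 hjt; omega
    have htq : t.val ≤ q + 1 := by omega
    -- t - 1 is not in A
    have hu : (⟨t.val - 1, by omega⟩ : Fin (q + 2)) ∉ A := by
      intro hmem
      rcases Nat.lt_or_ge j.val (t.val - 1) with h' | h'
      · have : (⟨t.val - 1, by omega⟩ : Fin (q + 2)) ∈ T := by
          simp only [hT, Finset.mem_filter]
          exact ⟨hmem, Fin.lt_def.2 (by simpa using h')⟩
        have := T.min'_le _ this
        have := Fin.le_def.1 this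
        simp at this
        omega
      · have : j = (⟨t.val - 1, by omega⟩ : Fin (q + 2)) := by
          apply Fin.ext
          have := Fin.lt_def.1 hjt
          simp
          omega
        exact hj (this ▸ hmem)
    obtain ⟨x', hlast, hfaces⟩ :=
      ih (A.erase t) (Finset.erase_ssubset htA) j (fun h => hj (Finset.mem_of_mem_erase h)) y
        (fun i hi => hy i (Finset.mem_of_mem_erase hi))
    set u : Fin (q + 2) := ⟨t.val - 1, by omega⟩ with hu_def
    set w : (X _⦋q + 1⦌ : Type _) := ((X.δ t.castSucc).hom x')⁻¹ with hw
    refine ⟨x' * (X.σ u).hom w, ?_, ?_⟩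
    · -- last face is y
      rw [map_mul, hlast]
      have e1 : (X.δ (Fin.last (q + 2))).hom ((X.σ u).hom w) =
          (X.σ (⟨t.val - 1, by omega⟩ : Fin (q + 1))).hom ((X.δ (Fin.last (q + 1))).hom w) := by
        rw [show (Fin.last (q + 2)) = (Fin.last (q + 1)).succ from Fin.ext (by simp),
          show u = (⟨t.val - 1, by omega⟩ : Fin (q + 1)).castSucc from Fin.ext (by simp [hu_def])]
        exact pds_gt X (Fin.lt_def.2 (by simp; omega)) w
      have e2 : (X.δ (Fin.last (q + 1))).hom w = 1 := by
        rw [hw, map_inv]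
        have := pdd X (show t ≤ Fin.last (q + 1) from Fin.le_def.2 (by simp; omega)) x'
        rw [show (Fin.last (q + 1)).succ = Fin.last (q + 2) from Fin.ext (by simp)] at this
        rw [← this, hlast, hy t htA, inv_one]
      rw [e1, e2, map_one, mul_one]
    · -- faces in A are 1
      intro i hi
      rw [map_mul]
      by_cases hit : i = t
      · -- the face being fixed
        rw [hit]
        have e1 : (X.δ t.castSucc).hom ((X.σ u).hom w) = w :=
          pds_succ X (Fin.ext (by simp [hu_def]; omega)) w
        rw [e1, hw, mul_inv_cancel]
      have hiA : i ∈ A.erase t := Finset.mem_erase.2 ⟨hit, hi⟩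
      have hiv : i.val ≠ t.val - 1 := by
        intro h
        exact hu (by rw [show u = i from Fin.ext (by simp [hu_def]; omega)]; exact hi)
      have hne' : i.val ≠ t.val := fun h => hit (Fin.ext h)
      rcases Nat.lt_or_ge i.val (t.val - 1) with hlt | hge
      · -- i below t - 1
        have ht2 : 2 ≤ t.val := by omega
        have e1 : (X.δ i.castSucc).hom ((X.σ u).hom w) =
            (X.σ (⟨t.val - 2, by omega⟩ : Fin (q + 1))).hom ((X.δ i).hom w) := by
          rw [show u = (⟨t.val - 2, by omega⟩ : Fin (q + 1)).succ from
              Fin.ext (by simp [hu_def]; omega)]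
          exact pds_le X (Fin.le_def.2 (by simp; omega)) w
        have e2 : (X.δ i).hom w = 1 := by
          rw [hw, map_inv]
          have := pdd X (show i ≤ u from Fin.le_def.2 (by simp [hu_def]; omega)) x'
          rw [show u.succ = t.castSucc from Fin.ext (by simp [hu_def]; omega)] at this
          rw [this, hfaces i hiA, map_one, inv_one]
        rw [e1, e2, map_one, hfaces i hiA, one_mul]
      · -- i above t
        have hgt : t.val < i.val := by omega
        have e1 : (X.δ i.castSucc).hom ((X.σ u).hom w) =
            (X.σ (⟨t.val - 1, by omega⟩ : Fin (q + 1))).hom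
              ((X.δ (⟨i.val - 1, by omega⟩ : Fin (q + 2))).hom w) := by
          rw [show i.castSucc = (⟨i.val - 1, by omega⟩ : Fin (q + 2)).succ from
              Fin.ext (by simp; omega),
            show u = (⟨t.val - 1, by omega⟩ : Fin (q + 1)).castSucc from
              Fin.ext (by simp [hu_def])]
          exact pds_gt X (Fin.lt_def.2 (by simp; omega)) w
        have e2 : (X.δ (⟨i.val - 1, by omega⟩ : Fin (q + 2))).hom w = 1 := by
          rw [hw, map_inv]
          have := pdd X (show t ≤ (⟨i.val - 1, by omega⟩ : Fin (q + 2)) from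
            Fin.le_def.2 (by simp; omega)) x'
          rw [show (⟨i.val - 1, by omega⟩ : Fin (q + 2)).succ = i.castSucc from
            Fin.ext (by simp; omega)] at this
          rw [← this, hfaces i hiA, map_one, inv_one]
        rw [e1, e2, map_one, hfaces i hiA, one_mul]
  · -- case (b): all of A is below the hole; take the greatest element t
    push_neg at hcase
    set t := A.max' hne with htdef
    have htA : t ∈ A := A.max'_mem hne
    have htj : t < j := lt_of_le_of_ne (hcase t htA) (fun h => hj (h ▸ htA))
    have htq : t.val ≤ q := by
      have h1 := Fin.lt_def.1 htj
      have := j.isLt; omega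
    obtain ⟨x', hlast, hfaces⟩ :=
      ih (A.erase t) (Finset.erase_ssubset htA) j (fun h => hj (Finset.mem_of_mem_erase h)) y
        (fun i hi => hy i (Finset.mem_of_mem_erase hi))
    set w : (X _⦋q + 1⦌ : Type _) := ((X.δ t.castSucc).hom x')⁻¹ with hw
    refine ⟨x' * (X.σ t).hom w, ?_, ?_⟩
    · rw [map_mul, hlast]
      have e1 : (X.δ (Fin.last (q + 2))).hom ((X.σ t).hom w) =
          (X.σ (⟨t.val, by omega⟩ : Fin (q + 1))).hom ((X.δ (Fin.last (q + 1))).hom w) := by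
        rw [show (X.σ t).hom = (X.σ ((⟨t.val, by omega⟩ : Fin (q + 1)).castSucc)).hom from
            congrArg (fun i => (X.σ i).hom) (Fin.ext (by simp)),
          show (Fin.last (q + 2)) = (Fin.last (q + 1)).succ from Fin.ext (by simp)]
        exact pds_gt X (Fin.lt_def.2 (by simp; omega)) w
      have e2 : (X.δ (Fin.last (q + 1))).hom w = 1 := by
        rw [hw, map_inv]
        have := pdd X (show t ≤ Fin.last (q + 1) from Fin.le_def.2 (by simp; omega)) x'
        rw [show (Fin.last (q + 1)).succ = Fin.last (q + 2) from Fin.ext (by simp)] at this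
        rw [← this, hlast, hy t htA, inv_one]
      rw [e1, e2, map_one, mul_one]
    · intro i hi
      rw [map_mul]
      by_cases hit : i = t
      · rw [hit]
        have e1 : (X.δ t.castSucc).hom ((X.σ t).hom w) = w := pds_self X rfl w
        rw [e1, hw, mul_inv_cancel]
      have hiA : i ∈ A.erase t := Finset.mem_erase.2 ⟨hit, hi⟩
      have hilt : i.val < t.val :=
        lt_of_le_of_ne (Fin.le_def.1 (A.le_max' i hi)) (fun h => hit (Fin.ext h))
      have ht1 : 1 ≤ t.val := by omega
      have e1 : (X.δ i.castSucc).hom ((X.σ t).hom w) =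
          (X.σ (⟨t.val - 1, by omega⟩ : Fin (q + 1))).hom ((X.δ i).hom w) := by
        rw [show (X.σ t).hom = (X.σ ((⟨t.val - 1, by omega⟩ : Fin (q + 1)).succ)).hom from
            congrArg (fun i => (X.σ i).hom) (Fin.ext (by simp; omega))]
        exact pds_le X (Fin.le_def.2 (by simp; omega)) w
      have e2 : (X.δ i).hom w = 1 := by
        rw [hw, map_inv]
        have := pdd X (show i ≤ (⟨t.val - 1, by omega⟩ : Fin (q + 2)) from
          Fin.le_def.2 (by simp; omega)) x'
        rw [show (⟨t.val - 1, by omega⟩ : Fin (q + 2)).succ = t.castSucc from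
          Fin.ext (by simp; omega)] at this
        rw [this, hfaces i hiA, map_one, inv_one]
      rw [e1, e2, map_one, hfaces i hiA, one_mul]

end SG

namespace SG

lemma adInf_empty {F : Type*} [Group F] {n : ℕ} (R : Fin n → Subgroup F) :
    adInf R (∅ : Finset (Fin n)) = ⊤ := by
  simp [adInf]

lemma adInf_const_univ {F : Type*} [Group F] (K : Subgroup F) :
    adInf (fun _ : Fin 1 => K) Finset.univ = K :=
  le_antisymm (iInf₂_le 0 (Finset.mem_univ 0)) (le_iInf₂ fun _ _ => le_rfl)

lemma adInf_univ {F : Type*} [Group F] {n : ℕ} (R : Fin n → Subgroup F) :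
    adInf R Finset.univ = ⨅ i, R i :=
  le_antisymm (le_iInf fun i => iInf₂_le i (Finset.mem_univ i)) (le_iInf₂ fun i _ => iInf_le _ i)

lemma mem_adInf {F : Type*} [Group F] {n : ℕ} (R : Fin n → Subgroup F) (B : Finset (Fin n))
    (x : F) : x ∈ adInf R B ↔ ∀ i ∈ B, x ∈ R i := by
  simp [adInf, Subgroup.mem_iInf]

lemma adInf_image2 (X : SimplicialObject GrpCat) (m : ℕ)
    (hyp : Subgroup.map ((X.δ (Fin.last (m + 2))).hom)
        (⨅ i : Fin (m + 2), MonoidHom.ker ((X.δ (Fin.castSucc i)).hom)) =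
      ⨅ i : Fin (m + 2), MonoidHom.ker ((X.δ i).hom))
    (B : Finset (Fin (m + 2))) :
    Subgroup.map ((X.δ (Fin.last (m + 2))).hom)
        (adInf (fun i : Fin (m + 2) => MonoidHom.ker ((X.δ (Fin.castSucc i)).hom)) B) =
      adInf (fun i : Fin (m + 2) => MonoidHom.ker ((X.δ i).hom)) B := by
  apply le_antisymm
  · rintro z hz
    rw [Subgroup.mem_map] at hz
    obtain ⟨x, hx, rfl⟩ := hz
    rw [mem_adInf] at hx
    rw [mem_adInf]
    intro i hi
    rw [MonoidHom.mem_ker]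
    have h1 := pdd X (show i ≤ Fin.last (m + 1) from Fin.le_def.2 (by simp; omega)) x
    rw [show (Fin.last (m + 1)).succ = Fin.last (m + 2) from Fin.ext (by simp)] at h1
    rw [h1, MonoidHom.mem_ker.1 (hx i hi), map_one]
  · intro y hy
    rw [mem_adInf] at hy
    have hy' : ∀ i ∈ B, (X.δ i).hom y = 1 := fun i hi => MonoidHom.mem_ker.1 (hy i hi)
    by_cases hB : B = Finset.univ
    · subst hB
      rw [adInf_univ, hyp]
      rw [Subgroup.mem_iInf]
      exact fun i => MonoidHom.mem_ker.2 (hy' i (Finset.mem_univ i))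
    · have hex : ∃ j, j ∉ B := by
        by_contra h
        push_neg at h
        exact hB (Finset.eq_univ_iff_forall.2 h)
      obtain ⟨j, hjB⟩ := hex
      obtain ⟨x, hx1, hx2⟩ := moore X m B j hjB y hy'
      exact ⟨x, (mem_adInf _ _ _).2 fun i hi => MonoidHom.mem_ker.2 (hx2 i hi), hx1⟩

lemma adInf_image1 (X : SimplicialObject GrpCat) (G : Type*) [Group G]
    (ε : (X _⦋0⦌ : Type _) →* G)
    (h1 : Subgroup.map ((X.δ (1 : Fin 2)).hom) (MonoidHom.ker ((X.δ (0 : Fin 2)).hom)) = ε.ker)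
    (B : Finset (Fin 1)) :
    Subgroup.map ((X.δ (1 : Fin 2)).hom)
        (adInf (fun _ : Fin 1 => MonoidHom.ker ((X.δ (0 : Fin 2)).hom)) B) =
      adInf (fun _ : Fin 1 => ε.ker) B := by
  rcases B.eq_empty_or_nonempty with rfl | hne
  · rw [adInf_empty, adInf_empty]
    apply Subgroup.map_top_of_surjective
    intro z
    exact ⟨(X.σ (0 : Fin 1)).hom z, pds_succ X (by decide) z⟩
  · have hB : B = Finset.univ := by
      obtain ⟨a, ha⟩ := hne
      refine Finset.eq_univ_iff_forall.2 fun i => ?_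
      rwa [Subsingleton.elim i a]
    subst hB
    rw [adInf_const_univ, adInf_const_univ]
    exact h1

end SG


/-- For an augmented simplicial group `(X, ε : X₀ → G)`, `k ≥ 2` and `n ≥ 1`, if
`d^n_n(⋂_{i<n} Ker d^n_i) = ⋂_{i<n} Ker d^{n-1}_i` (with the convention `Ker ε` on the
right for `n = 1`), then
`d^n_n(D_k(X_n; Ker d^n_0,…,Ker d^n_{n-1})) = D_k(X_{n-1}; Ker d^{n-1}_0,…,Ker d^{n-1}_{n-1})`
(for `n = 1` the right-hand side is `D_k(X₀; Ker ε)`).  The two conjuncts treat the cases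
`n = 1` and `n = m+2 ≥ 2`. -/
theorem image_last_face_adD (X : SimplicialObject GrpCat) (G : Type*) [Group G]
    (ε : (X _⦋0⦌ : Type _) →* G)
    (hε : ε.comp (X.δ (0 : Fin 2)).hom = ε.comp (X.δ (1 : Fin 2)).hom)
    (k : ℕ) (hk : 2 ≤ k) :
    -- the case n = 1
    ((Subgroup.map (X.δ (1 : Fin 2)).hom (MonoidHom.ker (X.δ (0 : Fin 2)).hom) = ε.ker) →
      Subgroup.map (X.δ (1 : Fin 2)).hom
          (adD (fun _ : Fin 1 => MonoidHom.ker (X.δ (0 : Fin 2)).hom) k Finset.univ) =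
        adD (fun _ : Fin 1 => ε.ker) k Finset.univ) ∧
    -- the case n = m + 2
    (∀ m : ℕ,
      (Subgroup.map (X.δ (Fin.last (m + 2))).hom
          (⨅ i : Fin (m + 2), MonoidHom.ker (X.δ (Fin.castSucc i)).hom) =
        ⨅ i : Fin (m + 2), MonoidHom.ker (X.δ i).hom) →
      Subgroup.map (X.δ (Fin.last (m + 2))).hom
          (adD (fun i : Fin (m + 2) => MonoidHom.ker (X.δ (Fin.castSucc i)).hom) k Finset.univ) =
        adD (fun i : Fin (m + 2) => MonoidHom.ker (X.δ i).hom) k Finset.univ) := by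
  constructor
  · intro h1
    exact adD_map _ _ _ (SG.adInf_image1 X G ε h1) Finset.univ
  · intro m h2
    exact adD_map _ _ _ (SG.adInf_image2 X m h2) Finset.univ
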